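/- Let 𝔤 be a Lie subalgebra of the n×n real matrices (a linear subspace closed under the matrix commutator [a,b] = ab − ba). Let A : ℝ → (continuous linear endomorphisms of 𝔤) be continuous in t and suppose every A_t is a derivation of the commutator: A_t([y, y']) = [A_t(y), y'] + [y, A_t(y')] for all y, y' ∈ 𝔤 and all t. If y₀, y₁, y₂ : ℝ → 𝔤 are differentiable curves satisfying dyᵢ(t)/dt = A_t(yᵢ(t)) for all t ≥ t₀ (i = 0,1,2) and y₀(t₀) = [y₁(t₀), y₂(t₀)], then y₀(t) = [y₁(t), y₂(t)] for all t ≥ t₀; in particular, the state transition mapping Φ_{t,t₀} of the linear system dy/dt = A_t y preserves the Lie bracket. (Appendix, Lemma on the supporting lemma of Proposition 1, property (ii).) -/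

import Mathlib

attribute [local instance] Matrix.normedAddCommGroup Matrix.normedSpace

/-- Matrix multiplication as a continuous bilinear map (finite dimensions). -/
noncomputable def matMulCLM (n : ℕ) :
    Matrix (Fin n) (Fin n) ℝ →L[ℝ] Matrix (Fin n) (Fin n) ℝ →L[ℝ] Matrix (Fin n) (Fin n) ℝ :=
  LinearMap.toContinuousLinearMap
    ((LinearMap.toContinuousLinearMap :
        (Matrix (Fin n) (Fin n) ℝ →ₗ[ℝ] Matrix (Fin n) (Fin n) ℝ) ≃ₗ[ℝ]
        (Matrix (Fin n) (Fin n) ℝ →L[ℝ] Matrix (Fin n) (Fin n) ℝ)).toLinearMap ∘ₗ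
      LinearMap.mul ℝ (Matrix (Fin n) (Fin n) ℝ))

@[simp] lemma matMulCLM_apply {n : ℕ} (x y : Matrix (Fin n) (Fin n) ℝ) :
    matMulCLM n x y = x * y := rfl

/-- **Supporting lemma of Proposition 1 (Appendix), property (ii).** Let `𝔤` be a Lie
subalgebra of the `n × n` real matrices, `A t` a continuous-in-`t` family of continuous
linear endomorphisms preserving `𝔤`, each a derivation of the commutator on `𝔤`. If
`y₀, y₁, y₂` are differentiable curves in `𝔤` solving `dy/dt = A t (y t)` for `t ≥ t₀`
and `y₀ t₀ = [y₁ t₀, y₂ t₀]`, then `y₀ t = [y₁ t, y₂ t]` for all `t ≥ t₀`; that is, the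
state transition mapping of the linear system preserves the Lie bracket. -/
theorem flow_preserves_bracket {n : ℕ} (hn : 0 < n)
    (𝔤 : Submodule ℝ (Matrix (Fin n) (Fin n) ℝ))
    (h𝔤 : ∀ x ∈ 𝔤, ∀ y ∈ 𝔤, x * y - y * x ∈ 𝔤)
    (A : ℝ → Matrix (Fin n) (Fin n) ℝ →L[ℝ] Matrix (Fin n) (Fin n) ℝ)
    (hA_cont : Continuous A)
    (hA_preserve : ∀ t : ℝ, ∀ v ∈ 𝔤, A t v ∈ 𝔤)
    (hA_der : ∀ t : ℝ, ∀ y ∈ 𝔤, ∀ y' ∈ 𝔤,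
      A t (y * y' - y' * y) =
        (A t y * y' - y' * A t y) + (y * A t y' - A t y' * y))
    (t₀ : ℝ) (y₀ y₁ y₂ : ℝ → Matrix (Fin n) (Fin n) ℝ)
    (hmem : ∀ t : ℝ, y₀ t ∈ 𝔤 ∧ y₁ t ∈ 𝔤 ∧ y₂ t ∈ 𝔤)
    (hderiv : ∀ t : ℝ, t₀ ≤ t →
      HasDerivAt y₀ (A t (y₀ t)) t ∧ HasDerivAt y₁ (A t (y₁ t)) t ∧
        HasDerivAt y₂ (A t (y₂ t)) t)
    (hinit : y₀ t₀ = y₁ t₀ * y₂ t₀ - y₂ t₀ * y₁ t₀) :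
    ∀ t : ℝ, t₀ ≤ t → y₀ t = y₁ t * y₂ t - y₂ t * y₁ t := by
  set z : ℝ → Matrix (Fin n) (Fin n) ℝ :=
    fun t => y₀ t - (y₁ t * y₂ t - y₂ t * y₁ t) with hz
  -- z solves z' = A t z for all t ≥ t₀
  have hz' : ∀ s : ℝ, t₀ ≤ s → HasDerivAt z (A s (z s)) s := by
    intro s hs
    obtain ⟨h0, h1, h2⟩ := hderiv s hs
    obtain ⟨m0, m1, m2⟩ := hmem s
    have h12 : HasDerivAt (fun t => y₁ t * y₂ t)
        (y₁ s * A s (y₂ s) + A s (y₁ s) * y₂ s) s := by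
      exact (matMulCLM n).hasDerivAt_of_bilinear (fun _ => h1) (fun _ => h2)
    have h21 : HasDerivAt (fun t => y₂ t * y₁ t)
        (y₂ s * A s (y₁ s) + A s (y₂ s) * y₁ s) s := by
      exact (matMulCLM n).hasDerivAt_of_bilinear (fun _ => h2) (fun _ => h1)
    have := h0.sub (h12.sub h21)
    refine this.congr_deriv ?_
    rw [hz, map_sub, hA_der s _ m1 _ m2]
    abel
  intro T hT
  -- uniqueness of ODE solutions on [t₀, T] with the clamped vector field
  letI : NormedAddCommGroup (Matrix (Fin n) (Fin n) ℝ →L[ℝ] Matrix (Fin n) (Fin n) ℝ) :=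
    ContinuousLinearMap.toNormedAddCommGroup
  obtain ⟨C, hC⟩ := (isCompact_Icc (a := t₀) (b := T)).exists_bound_of_continuousOn
    hA_cont.continuousOn
  set K : NNReal := ⟨max C 0, le_max_right _ _⟩ with hK
  have hclamp_mem : ∀ s : ℝ, max t₀ (min s T) ∈ Set.Icc t₀ T := by
    intro s
    constructor
    · exact le_max_left _ _
    · exact max_le hT (min_le_right _ _)
  have hlip : ∀ s : ℝ, LipschitzWith K (fun x => A (max t₀ (min s T)) x) := by
    intro s
    refine ((A (max t₀ (min s T))).lipschitz).weaken ?_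
    rw [← NNReal.coe_le_coe]
    change ‖A (max t₀ (min s T))‖ ≤ max C 0
    exact le_trans (hC _ (hclamp_mem s)) (le_max_left C 0)
  have hclamp_eq : ∀ s ∈ Set.Icc t₀ T, max t₀ (min s T) = s := by
    intro s hs
    rw [min_eq_left hs.2, max_eq_right hs.1]
  have key : Set.EqOn z (fun _ => 0) (Set.Icc t₀ T) := by
    refine ODE_solution_unique_of_mem_Icc_right
      (v := fun s x => A (max t₀ (min s T)) x) (s := fun _ => Set.univ)
      (fun s _ => (hlip s).lipschitzOnWith) ?_ ?_ (fun _ _ => trivial) ?_ ?_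
      (fun _ _ => trivial) ?_
    · intro s hs
      exact (hz' s hs.1).continuousAt.continuousWithinAt
    · intro s hs
      have := (hz' s hs.1).hasDerivWithinAt (s := Set.Ici s)
      simpa [hclamp_eq s ⟨hs.1, hs.2.le⟩] using this
    · exact continuousOn_const
    · intro s hs
      have : HasDerivWithinAt (fun _ : ℝ => (0 : Matrix (Fin n) (Fin n) ℝ)) 0
          (Set.Ici s) s := (hasDerivAt_const s 0).hasDerivWithinAt
      simp only [map_zero]
      exact this
    · simp [hz, hinit]
  have := key ⟨hT, le_refl T⟩
  simpa [hz, sub_eq_zero] using this
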